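/- Let x : ℤ → ℤ be a sequence of integers. For every integer i, the set of descendants of i in the record graph of x is exactly {j ∈ ℤ : j ≤ i and ∑_{l=k}^{i-1} x_l ≥ 0 for every k with j ≤ k < i}. In particular, every descendant of i is at most i, and an integer j ≤ i is a descendant of i if and only if all the partial sums y(k,i) = ∑_{l=k}^{i-1} x_l with j ≤ k < i are nonnegative. -/
import Mathlib


/-- The record map of an integer-valued sequence `x : ℤ → ℤ`: `recordMap x i` is the least
`n > i` such that `∑_{l=i}^{n-1} x l ≥ 0` if such an `n` exists, and `i` otherwise. -/
noncomputable def recordMap (x : ℤ → ℤ) (i : ℤ) : ℤ := by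
  classical
  exact if ∃ n, i < n ∧ 0 ≤ ∑ l ∈ Finset.Ico i n, x l then
    sInf {n : ℤ | i < n ∧ 0 ≤ ∑ l ∈ Finset.Ico i n, x l}
  else i

lemma sum_Ico_split (x : ℤ → ℤ) {a b c : ℤ} (hab : a ≤ b) (hbc : b ≤ c) :
    ∑ l ∈ Finset.Ico a b, x l + ∑ l ∈ Finset.Ico b c, x l = ∑ l ∈ Finset.Ico a c, x l := by
  rw [← Finset.sum_union (Finset.Ico_disjoint_Ico_consecutive a b c),
    Finset.Ico_union_Ico_eq_Ico hab hbc]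

lemma recordMap_cases (x : ℤ → ℤ) (j : ℤ) :
    (recordMap x j = j ∧ ¬ ∃ n, j < n ∧ 0 ≤ ∑ l ∈ Finset.Ico j n, x l) ∨
    (j < recordMap x j ∧ 0 ≤ ∑ l ∈ Finset.Ico j (recordMap x j), x l ∧
      ∀ k, j < k → k < recordMap x j → ∑ l ∈ Finset.Ico j k, x l < 0) := by
  unfold recordMap
  split_ifs with h
  · right
    have hbdd : BddBelow {n : ℤ | j < n ∧ 0 ≤ ∑ l ∈ Finset.Ico j n, x l} :=
      ⟨j, fun n hn => le_of_lt hn.1⟩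
    have hmem := Int.csInf_mem h hbdd
    refine ⟨hmem.1, hmem.2, ?_⟩
    intro k hk1 hk2
    by_contra hle
    push_neg at hle
    exact absurd (csInf_le hbdd ⟨hk1, hle⟩) (not_le.mpr hk2)
  · exact Or.inl ⟨rfl, h⟩

lemma forward_aux (x : ℤ → ℤ) (i : ℤ) : ∀ n : ℕ, ∀ j, (recordMap x)^[n] j = i →
    j ≤ i ∧ ∀ k, j ≤ k → k < i → 0 ≤ ∑ l ∈ Finset.Ico k i, x l := by
  intro n
  induction n with
  | zero =>
    intro j hj
    simp only [Function.iterate_zero, id_eq] at hj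
    subst hj
    exact ⟨le_refl _, fun k hk1 hk2 => absurd hk2 (not_lt.mpr hk1)⟩
  | succ n ih =>
    intro j hj
    rw [Function.iterate_succ_apply] at hj
    rcases recordMap_cases x j with ⟨h, _⟩ | ⟨hlt, hsum, hmin⟩
    · rw [h] at hj; exact ih j hj
    · obtain ⟨hle, hall⟩ := ih _ hj
      set m := recordMap x j with hm
      refine ⟨le_trans (le_of_lt hlt) hle, ?_⟩
      intro k hk1 hk2
      by_cases hkm : m ≤ k
      · exact hall k hkm hk2
      · push_neg at hkm
        have hsplit : ∑ l ∈ Finset.Ico k m, x l + ∑ l ∈ Finset.Ico m i, x l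
            = ∑ l ∈ Finset.Ico k i, x l :=
          sum_Ico_split x (le_of_lt hkm) hle
        have h1 : 0 ≤ ∑ l ∈ Finset.Ico k m, x l := by
          rcases eq_or_lt_of_le hk1 with heq | hlt2
          · exact heq ▸ hsum
          · have hneg := hmin k hlt2 hkm
            have hsplit2 : ∑ l ∈ Finset.Ico j k, x l + ∑ l ∈ Finset.Ico k m, x l
                = ∑ l ∈ Finset.Ico j m, x l :=
              sum_Ico_split x hk1 (le_of_lt hkm)
            linarith
        have h2 : 0 ≤ ∑ l ∈ Finset.Ico m i, x l := by
          rcases eq_or_lt_of_le hle with heq | hlt2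
          · rw [heq]; simp
          · exact hall m le_rfl hlt2
        linarith

lemma backward_aux (x : ℤ → ℤ) (i : ℤ) : ∀ d : ℕ, ∀ j, i - j ≤ (d : ℤ) → j ≤ i →
    (∀ k, j ≤ k → k < i → 0 ≤ ∑ l ∈ Finset.Ico k i, x l) →
    ∃ n : ℕ, (recordMap x)^[n] j = i := by
  intro d
  induction d with
  | zero =>
    intro j hd hle _
    have : j = i := le_antisymm hle (by push_cast at hd; linarith)
    exact ⟨0, by simp [this]⟩
  | succ d ih =>
    intro j hd hle hsums
    rcases eq_or_lt_of_le hle with heq | hlt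
    · exact ⟨0, by simp [heq]⟩
    · have hne : ∃ n, j < n ∧ 0 ≤ ∑ l ∈ Finset.Ico j n, x l :=
        ⟨i, hlt, hsums j le_rfl hlt⟩
      rcases recordMap_cases x j with ⟨_, hno⟩ | ⟨hjm, _, hmin⟩
      · exact absurd hne hno
      · set m := recordMap x j with hm
        have hmi : m ≤ i := by
          by_contra hmi
          push_neg at hmi
          exact absurd (hsums j le_rfl hlt) (not_le.mpr (hmin i hlt hmi))
        have hd' : i - m ≤ (d : ℤ) := by push_cast at hd ⊢; omega
        obtain ⟨n, hn⟩ := ih m hd' hmi (fun k hk1 hk2 =>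
          hsums k (le_trans (le_of_lt hjm) hk1) hk2)
        exact ⟨n + 1, by rw [Function.iterate_succ_apply]; exact hn⟩

/-- The set of descendants of `i` in the record graph of `x` (those `j` with `j = i` or
`R_x^n (j) = i` for some `n ≥ 1`) is exactly the set of `j ≤ i` such that all the partial sums
`y(k,i) = ∑_{l=k}^{i-1} x l` with `j ≤ k < i` are nonnegative. -/
theorem descendants_eq_interval (x : ℤ → ℤ) (i : ℤ) :
    {j : ℤ | ∃ n : ℕ, (recordMap x)^[n] j = i} =
      {j : ℤ | j ≤ i ∧ ∀ k : ℤ, j ≤ k → k < i → 0 ≤ ∑ l ∈ Finset.Ico k i, x l} := by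
  ext j
  simp only [Set.mem_setOf_eq]
  constructor
  · rintro ⟨n, hn⟩
    exact forward_aux x i n j hn
  · rintro ⟨hle, hsums⟩
    exact backward_aux x i (i - j).toNat j (Int.self_le_toNat _) hle hsums
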